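/- Let A and B be Hurwitz real matrices (possibly of different sizes) having the same minimal polynomial. Then T_cut(A) = T_cut(B), i.e., the critical value T_cut of a Hurwitz matrix depends only on its minimal polynomial. -/

import Mathlib

open Matrix Set Filter Topology

noncomputable section

/-- A real square matrix is *Hurwitz* if all its (complex) eigenvalues,
i.e. the roots of its characteristic polynomial over `ℂ`, have negative real part. -/
def IsHurwitz {d : ℕ} (A : Matrix (Fin d) (Fin d) ℝ) : Prop :=
  ∀ μ : ℂ, (A.map (algebraMap ℝ ℂ)).charpoly.IsRoot μ → μ.re < 0

/-- The trajectory `x(t) = e^{tA} x₀` of the linear system `ẋ = Ax`. -/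
def traj {d : ℕ} (A : Matrix (Fin d) (Fin d) ℝ) (x₀ : Fin d → ℝ) (t : ℝ) : Fin d → ℝ :=
  (NormedSpace.exp (t • A)).mulVec x₀

/-- Symmetrized convex hull `co_s X = co (X ∪ (−X))`. -/
def symCo {d : ℕ} (X : Set (Fin d → ℝ)) : Set (Fin d → ℝ) :=
  convexHull ℝ (X ∪ (-X))

/-- `G = co_s {x(t) : t ≥ 0}`, the symmetrized convex hull of the whole trajectory. -/
def trajHull {d : ℕ} (A : Matrix (Fin d) (Fin d) ℝ) (x₀ : Fin d → ℝ) : Set (Fin d → ℝ) :=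
  symCo (traj A x₀ '' Ici (0:ℝ))

/-- `T > 0` is a *cut tail point* of the trajectory starting at `x₀` if `x(t)` lies in the
relative (intrinsic) interior of `G` for every `t ≥ T`. -/
def IsCutTailPoint {d : ℕ} (A : Matrix (Fin d) (Fin d) ℝ) (x₀ : Fin d → ℝ) (T : ℝ) : Prop :=
  0 < T ∧ ∀ t, T ≤ t → traj A x₀ t ∈ intrinsicInterior ℝ (trajHull A x₀)

/-- `T_cut(x₀)`: the infimum of all cut tail points of the trajectory starting at `x₀`. -/
def Tcut {d : ℕ} (A : Matrix (Fin d) (Fin d) ℝ) (x₀ : Fin d → ℝ) : ℝ :=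
  sInf {T | IsCutTailPoint A x₀ T}

/-- `L_{x₀}`: the minimal `A`-invariant linear subspace of `ℝ^d` containing `x₀`. -/
def minInv {d : ℕ} (A : Matrix (Fin d) (Fin d) ℝ) (x₀ : Fin d → ℝ) : Submodule ℝ (Fin d → ℝ) :=
  sInf {L | x₀ ∈ L ∧ ∀ v ∈ L, A.mulVec v ∈ L}

/-- A point `x₀` is *generic* if `dim L_{x₀}` equals the degree of the minimal polynomial of `A`. -/
def IsGeneric {d : ℕ} (A : Matrix (Fin d) (Fin d) ℝ) (x₀ : Fin d → ℝ) : Prop :=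
  Module.finrank ℝ (minInv A x₀) = (minpoly ℝ A).natDegree

section Aux

open Polynomial
open scoped Nat


def mulVecAt {d e : ℕ} (z : Fin e → ℝ) :
    Matrix (Fin d) (Fin e) ℝ →ₗ[ℝ] (Fin d → ℝ) where
  toFun M := M.mulVec z
  map_add' M N := Matrix.add_mulVec M N z
  map_smul' c M := Matrix.smul_mulVec c M z

@[simp] lemma mulVecAt_apply {d e : ℕ} (z : Fin e → ℝ) (M : Matrix (Fin d) (Fin e) ℝ) :
    mulVecAt z M = M.mulVec z := rfl

-- reduction of polynomial evaluation mod a monic annihilating polynomial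
lemma reduce_lemma {d : ℕ} {p : ℝ[X]} (hmonic : p.Monic) (hm : 0 < p.natDegree)
    (M : Matrix (Fin d) (Fin d) ℝ) (hM : aeval M p = 0) (q : ℝ[X]) (z : Fin d → ℝ) :
    (aeval M q).mulVec z
      = ∑ i ∈ Finset.range p.natDegree, (q %ₘ p).coeff i • (M ^ i).mulVec z := by
  have hdeg : (q %ₘ p).natDegree < p.natDegree := by
    rcases eq_or_ne (q %ₘ p) 0 with h0 | h0
    · rw [h0]; simpa using hm
    · exact natDegree_lt_natDegree h0 (degree_modByMonic_lt q hmonic)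
  have haq : aeval M q = aeval M (q %ₘ p) := by
    conv_lhs => rw [← modByMonic_add_div q p]
    rw [map_add, _root_.map_mul, hM, zero_mul, add_zero]
  rw [haq, aeval_eq_sum_range' hdeg]
  rw [show (∑ i ∈ Finset.range p.natDegree, (q %ₘ p).coeff i • M ^ i) *ᵥ z
      = mulVecAt z (∑ i ∈ Finset.range p.natDegree, (q %ₘ p).coeff i • M ^ i) from rfl,
    map_sum (mulVecAt z)]
  refine Finset.sum_congr rfl fun i _ => ?_
  rw [_root_.map_smul]
  rfl

lemma powmem_lemma {d : ℕ} {p : ℝ[X]} (hmonic : p.Monic) (hm : 0 < p.natDegree)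
    (M : Matrix (Fin d) (Fin d) ℝ) (hM : aeval M p = 0) (z : Fin d → ℝ) (n : ℕ) :
    (M ^ n).mulVec z ∈ Submodule.span ℝ
      (Set.range fun i : Fin p.natDegree => (M ^ (i : ℕ)).mulVec z) := by
  have h1 : (M ^ n).mulVec z = (aeval M (X ^ n : ℝ[X])).mulVec z := by
    rw [map_pow, aeval_X]
  rw [h1, reduce_lemma hmonic hm M hM]
  refine Submodule.sum_mem _ fun i hi => Submodule.smul_mem _ _ ?_
  exact Submodule.subset_span ⟨⟨i, Finset.mem_range.mp hi⟩, rfl⟩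

lemma minInv_eq_lemma {d : ℕ} {p : ℝ[X]} (hmonic : p.Monic) (hm : 0 < p.natDegree)
    (M : Matrix (Fin d) (Fin d) ℝ) (hM : aeval M p = 0) (z : Fin d → ℝ) :
    minInv M z = Submodule.span ℝ
      (Set.range fun i : Fin p.natDegree => (M ^ (i : ℕ)).mulVec z) := by
  have hzmem : z ∈ minInv M z := by
    unfold minInv; exact Submodule.mem_sInf.mpr fun L hL => hL.1
  have hstep : ∀ u, u ∈ minInv M z → M.mulVec u ∈ minInv M z := by
    unfold minInv
    exact fun u hu => Submodule.mem_sInf.mpr fun L hL => hL.2 _ (Submodule.mem_sInf.mp hu L hL)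
  have powInv : ∀ n : ℕ, (M ^ n).mulVec z ∈ minInv M z := by
    intro n
    induction n with
    | zero => rw [pow_zero, Matrix.one_mulVec]; exact hzmem
    | succ k ih =>
      have step := hstep _ ih
      rwa [Matrix.mulVec_mulVec, ← pow_succ'] at step
  apply le_antisymm
  · apply sInf_le
    refine ⟨?_, ?_⟩
    · have h0 := powmem_lemma hmonic hm M hM z 0
      rwa [pow_zero, Matrix.one_mulVec] at h0
    · intro u hu
      induction hu using Submodule.span_induction with
      | mem u hu =>
        obtain ⟨i, rfl⟩ := hu
        have : M.mulVec ((M ^ (i : ℕ)).mulVec z) = (M ^ ((i : ℕ) + 1)).mulVec z := by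
          rw [Matrix.mulVec_mulVec, ← pow_succ']
        rw [this]
        exact powmem_lemma hmonic hm M hM z _
      | zero => rw [Matrix.mulVec_zero]; exact Submodule.zero_mem _
      | add u v _ _ hu hv => rw [Matrix.mulVec_add]; exact Submodule.add_mem _ hu hv
      | smul a u _ hu => rw [Matrix.mulVec_smul]; exact Submodule.smul_mem _ _ hu
  · rw [Submodule.span_le]
    rintro _ ⟨i, rfl⟩
    exact powInv i

lemma summable_exp_lemma {d : ℕ} (M : Matrix (Fin d) (Fin d) ℝ) :
    Summable (fun n : ℕ => (n !⁻¹ : ℝ) • M ^ n) := by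
  letI : SeminormedRing (Matrix (Fin d) (Fin d) ℝ) := Matrix.linftyOpSemiNormedRing
  letI : NormedRing (Matrix (Fin d) (Fin d) ℝ) := Matrix.linftyOpNormedRing
  letI : NormedAlgebra ℝ (Matrix (Fin d) (Fin d) ℝ) := Matrix.linftyOpNormedAlgebra
  exact NormedSpace.expSeries_summable' M

lemma traj_eq_tsum {d : ℕ} (M : Matrix (Fin d) (Fin d) ℝ) (z : Fin d → ℝ) (t : ℝ) :
    traj M z t = ∑' n : ℕ, ((n !⁻¹ : ℝ) • (t • M) ^ n).mulVec z := by
  unfold traj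
  rw [NormedSpace.exp_eq_tsum ℝ]
  exact (LinearMap.toContinuousLinearMap (mulVecAt z)).map_tsum (summable_exp_lemma (t • M))

lemma aux_intrinsic {E F : Type*} [NormedAddCommGroup E] [NormedSpace ℝ E]
    [NormedAddCommGroup F] [NormedSpace ℝ F]
    (f : E →ₗ[ℝ] F) (g : F →ₗ[ℝ] E) (hf : Continuous f) (hg : Continuous g)
    (s : Set E) (hinv : ∀ z ∈ affineSpan ℝ s, g (f z) = z) :
    f '' intrinsicInterior ℝ s ⊆ intrinsicInterior ℝ (f '' s) := by
  have hmap : (affineSpan ℝ s).map f.toAffineMap = affineSpan ℝ (f '' s) := by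
    rw [AffineSubspace.map_span]
    congr 1
  have hmem₁ : ∀ w : affineSpan ℝ s, f (w : E) ∈ affineSpan ℝ (f '' s) := fun w => by
    rw [← hmap]
    exact AffineSubspace.mem_map.mpr ⟨(w : E), w.2, rfl⟩
  have hmem₂ : ∀ u : affineSpan ℝ (f '' s), ∃ z ∈ affineSpan ℝ s, f z = (u : F) := fun u => by
    obtain ⟨z, hz, hfz⟩ := AffineSubspace.mem_map.mp (show _ ∈ (affineSpan ℝ s).map f.toAffineMap by rw [hmap]; exact u.2)
    exact ⟨z, hz, hfz⟩
  have hgmem : ∀ u : affineSpan ℝ (f '' s), g (u : F) ∈ affineSpan ℝ s := fun u => by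
    obtain ⟨z, hz, hfz⟩ := hmem₂ u
    rw [← hfz, hinv z hz]; exact hz
  let homeo : (affineSpan ℝ s : Set E) ≃ₜ (affineSpan ℝ (f '' s) : Set F) :=
    { toFun := fun w => ⟨f w, hmem₁ w⟩
      invFun := fun u => ⟨g u, hgmem u⟩
      left_inv := fun w => Subtype.ext (hinv w w.2)
      right_inv := fun u => Subtype.ext (by
        obtain ⟨z, hz, hfz⟩ := hmem₂ u
        show f (g u) = u
        rw [← hfz, hinv z hz])
      continuous_toFun := Continuous.subtype_mk (hf.comp continuous_subtype_val) _
      continuous_invFun := Continuous.subtype_mk (hg.comp continuous_subtype_val) _ }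
  have him : ⇑homeo '' ((↑) ⁻¹' s) = ((↑) ⁻¹' (f '' s) : Set (affineSpan ℝ (f '' s))) := by
    ext u
    constructor
    · rintro ⟨w, hw, rfl⟩
      exact ⟨(w : E), hw, rfl⟩
    · intro hu
      obtain ⟨z, hz, hfz⟩ := hu
      exact ⟨⟨z, subset_affineSpan ℝ s hz⟩, hz, Subtype.ext hfz⟩
  rintro fx ⟨xx, hxx, rfl⟩
  obtain ⟨yy, hy, hyx⟩ := mem_intrinsicInterior.mp hxx
  refine mem_intrinsicInterior.mpr ⟨homeo yy, ?_, ?_⟩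
  · rw [← him, ← homeo.image_interior]
    exact ⟨yy, hy, rfl⟩
  · show f (yy : E) = f xx
    rw [hyx]


lemma key_lemma {d₁ d₂ : ℕ}
    (A : Matrix (Fin d₁) (Fin d₁) ℝ) (B : Matrix (Fin d₂) (Fin d₂) ℝ)
    (h : minpoly ℝ A = minpoly ℝ B) {x : Fin d₁ → ℝ} (hx : IsGeneric A x)
    {y : Fin d₂ → ℝ} (hy : IsGeneric B y) {T : ℝ} (hT : IsCutTailPoint A x T) :
    IsCutTailPoint B y T := by
  set p := minpoly ℝ A with hp
  have hpA : aeval A p = 0 := minpoly.aeval ℝ A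
  have hpB : aeval B p = 0 := by rw [show p = minpoly ℝ B from h]; exact minpoly.aeval ℝ B
  have hmonic : p.Monic := minpoly.monic A.isIntegral
  by_cases hm0 : p.natDegree = 0
  · -- degenerate case : both spaces are trivial
    have hp1 : p = 1 := hmonic.natDegree_eq_zero.mp hm0
    have h10 : (1 : Matrix (Fin d₂) (Fin d₂) ℝ) = 0 := by
      have := hpB; rwa [hp1, _root_.map_one] at this
    have hempty : IsEmpty (Fin d₂) := by
      by_contra hne
      rw [not_isEmpty_iff] at hne
      obtain ⟨i⟩ := hne
      have h2 := congrFun (congrFun h10 i) i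
      rw [Matrix.one_apply_eq] at h2
      exact absurd h2 one_ne_zero
    refine ⟨hT.1, fun t _ => ?_⟩
    have huniv : trajHull B y = univ := by
      apply Set.eq_univ_of_forall
      intro z
      have hz : z = traj B y 0 := Subsingleton.elim _ _
      rw [hz]
      exact subset_convexHull ℝ _ (Or.inl ⟨0, mem_Ici.mpr (le_refl 0), rfl⟩)
    rw [huniv]
    refine mem_intrinsicInterior.mpr
      ⟨⟨traj B y t, subset_affineSpan ℝ _ (mem_univ _)⟩, ?_, rfl⟩
    rw [preimage_univ, interior_univ]; trivial
  · -- main case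
    have hm : 0 < p.natDegree := Nat.pos_of_ne_zero hm0
    set m := p.natDegree with hmdef
    set v : Fin m → (Fin d₁ → ℝ) := fun i => (A ^ (i : ℕ)).mulVec x with hv
    set w : Fin m → (Fin d₂ → ℝ) := fun i => (B ^ (i : ℕ)).mulVec y with hw
    set K : Submodule ℝ (Fin d₁ → ℝ) := Submodule.span ℝ (Set.range v) with hK
    set K' : Submodule ℝ (Fin d₂ → ℝ) := Submodule.span ℝ (Set.range w) with hK'
    have hfrK : Module.finrank ℝ K = m := by
      rw [hK, ← minInv_eq_lemma hmonic hm A hpA x]; exact hx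
    have hfrK' : Module.finrank ℝ K' = m := by
      rw [hK', ← minInv_eq_lemma hmonic hm B hpB y]
      rw [hy, ← h]
    have li : LinearIndependent ℝ v := by
      rw [linearIndependent_iff_card_eq_finrank_span]
      rw [Set.finrank]
      rw [← hK, hfrK, Fintype.card_fin]
    have li' : LinearIndependent ℝ w := by
      rw [linearIndependent_iff_card_eq_finrank_span]
      rw [Set.finrank]
      rw [← hK', hfrK', Fintype.card_fin]
    -- bases and the intertwining maps
    let bK : Module.Basis (Fin m) ℝ K := Module.Basis.span li
    let bK' : Module.Basis (Fin m) ℝ K' := Module.Basis.span li'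
    let e : K ≃ₗ[ℝ] K' := bK.equiv bK' (Equiv.refl _)
    obtain ⟨q₁, hc₁⟩ := Submodule.exists_isCompl K
    obtain ⟨q₂, hc₂⟩ := Submodule.exists_isCompl K'
    let phiM : (Fin d₁ → ℝ) →ₗ[ℝ] (Fin d₂ → ℝ) :=
      K'.subtype ∘ₗ e.toLinearMap ∘ₗ (K.projectionOnto q₁ hc₁)
    let psiM : (Fin d₂ → ℝ) →ₗ[ℝ] (Fin d₁ → ℝ) :=
      K.subtype ∘ₗ e.symm.toLinearMap ∘ₗ (K'.projectionOnto q₂ hc₂)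
    have phiMK : ∀ (u : Fin d₁ → ℝ) (hu : u ∈ K), phiM u = ((e ⟨u, hu⟩ : K') : Fin d₂ → ℝ) := by
      intro u hu
      show K'.subtype (e (K.projectionOnto q₁ hc₁ u)) = _
      rw [show K.projectionOnto q₁ hc₁ u
          = K.projectionOnto q₁ hc₁ ((⟨u, hu⟩ : K) : Fin d₁ → ℝ) from rfl,
        Submodule.projectionOnto_apply_left hc₁]
      rfl
    have psiMK' : ∀ (u : Fin d₂ → ℝ) (hu : u ∈ K'), psiM u = ((e.symm ⟨u, hu⟩ : K) : Fin d₁ → ℝ) := by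
      intro u hu
      show K.subtype (e.symm (K'.projectionOnto q₂ hc₂ u)) = _
      rw [show K'.projectionOnto q₂ hc₂ u
          = K'.projectionOnto q₂ hc₂ ((⟨u, hu⟩ : K') : Fin d₂ → ℝ) from rfl,
        Submodule.projectionOnto_apply_left hc₂]
      rfl
    have hpsiMphiM : ∀ u ∈ K, psiM (phiM u) = u := by
      intro u hu
      rw [phiMK u hu, psiMK' _ (e ⟨u, hu⟩).2]
      rw [show (⟨((e ⟨u, hu⟩ : K') : Fin d₂ → ℝ), (e ⟨u, hu⟩).2⟩ : K') = e ⟨u, hu⟩ from rfl]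
      rw [LinearEquiv.symm_apply_apply]
    have phiMv : ∀ i : Fin m, phiM (v i) = w i := by
      intro i
      have hvK : v i ∈ K := Submodule.subset_span ⟨i, rfl⟩
      rw [phiMK _ hvK]
      have hb : (⟨v i, hvK⟩ : K) = bK i := (Module.Basis.span_apply li i).symm
      rw [hb]
      show ((e (bK i) : K') : Fin d₂ → ℝ) = w i
      rw [show e (bK i) = bK' i from by simp [e, Module.Basis.equiv_apply]]
      exact congrArg Subtype.val (Module.Basis.span_apply li' i)
    have phiMpow : ∀ n : ℕ, phiM ((A ^ n).mulVec x) = (B ^ n).mulVec y := by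
      intro n
      have h1 : (A ^ n).mulVec x = (aeval A (X ^ n : ℝ[X])).mulVec x := by
        rw [map_pow, aeval_X]
      have h2 : (B ^ n).mulVec y = (aeval B (X ^ n : ℝ[X])).mulVec y := by
        rw [map_pow, aeval_X]
      rw [h1, h2, reduce_lemma hmonic hm A hpA _ x, reduce_lemma hmonic hm B hpB _ y,
        map_sum phiM]
      refine Finset.sum_congr rfl fun i hi => ?_
      rw [_root_.map_smul]
      have := phiMv ⟨i, Finset.mem_range.mp hi⟩
      simp only [hv, hw] at this
      rw [this]
    have htraj : ∀ t : ℝ, phiM (traj A x t) = traj B y t := by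
      intro t
      rw [traj_eq_tsum A x t, traj_eq_tsum B y t]
      have hsumm : Summable (fun n : ℕ => ((n !⁻¹ : ℝ) • (t • A) ^ n).mulVec x) :=
        (LinearMap.toContinuousLinearMap (mulVecAt x)).summable (summable_exp_lemma (t • A))
      rw [show phiM (∑' (n : ℕ), ((n !⁻¹ : ℝ) • (t • A) ^ n).mulVec x)
          = (LinearMap.toContinuousLinearMap phiM)
              (∑' (n : ℕ), ((n !⁻¹ : ℝ) • (t • A) ^ n).mulVec x) from rfl,
        (LinearMap.toContinuousLinearMap phiM).map_tsum hsumm]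
      refine tsum_congr fun n => ?_
      show phiM (((n !⁻¹ : ℝ) • (t • A) ^ n).mulVec x) = ((n !⁻¹ : ℝ) • (t • B) ^ n).mulVec y
      rw [_root_.smul_pow, _root_.smul_pow, smul_smul, smul_smul, Matrix.smul_mulVec,
        Matrix.smul_mulVec, _root_.map_smul, phiMpow n]
    have trajK : ∀ t : ℝ, traj A x t ∈ K := by
      intro t
      rw [traj_eq_tsum A x t]
      have hsumm : Summable (fun n : ℕ => ((n !⁻¹ : ℝ) • (t • A) ^ n).mulVec x) :=
        (LinearMap.toContinuousLinearMap (mulVecAt x)).summable (summable_exp_lemma (t • A))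
      refine (K.closed_of_finiteDimensional).mem_of_tendsto
        hsumm.hasSum.tendsto_sum_nat (Filter.Eventually.of_forall fun n => ?_)
      refine Submodule.sum_mem _ fun i _ => ?_
      rw [_root_.smul_pow, smul_smul, Matrix.smul_mulVec]
      exact K.smul_mem _ (powmem_lemma hmonic hm A hpA x i)
    have hsK : trajHull A x ⊆ (K : Set (Fin d₁ → ℝ)) := by
      apply convexHull_min ?_ K.convex
      rintro z (⟨t, _, rfl⟩ | hz)
      · exact trajK t
      · rw [Set.mem_neg] at hz
        obtain ⟨t, _, hzz⟩ := hz
        have := trajK t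
        rw [hzz] at this
        exact (Submodule.neg_mem_iff K).mp this
    have hhull : trajHull B y = phiM '' trajHull A x := by
      have himgtraj : traj B y '' Ici 0 = phiM '' (traj A x '' Ici 0) := by
        rw [Set.image_image]
        exact Set.image_congr fun t _ => (htraj t).symm
      have hnegimg : phiM '' (-(traj A x '' Ici 0)) = -(phiM '' (traj A x '' Ici 0)) := by
        ext u
        constructor
        · rintro ⟨z, hz, rfl⟩
          rw [Set.mem_neg] at hz ⊢
          exact ⟨-z, hz, by rw [map_neg]⟩
        · intro hu
          rw [Set.mem_neg] at hu
          obtain ⟨z, hz, hphiMz⟩ := hu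
          exact ⟨-z, by rwa [Set.mem_neg, neg_neg], by rw [map_neg, hphiMz, neg_neg]⟩
      show symCo (traj B y '' Ici 0) = phiM '' symCo (traj A x '' Ici 0)
      unfold symCo
      rw [himgtraj, ← hnegimg, ← Set.image_union, phiM.image_convexHull]
    have hinv : ∀ z ∈ affineSpan ℝ (trajHull A x), psiM (phiM z) = z := by
      intro z hz
      have hle : affineSpan ℝ (trajHull A x) ≤ K.toAffineSubspace :=
        affineSpan_le.mpr (fun u hu => Submodule.mem_toAffineSubspace.mpr (hsK hu))
      exact hpsiMphiM z (Submodule.mem_toAffineSubspace.mp (hle hz))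
    refine ⟨hT.1, fun t ht => ?_⟩
    have h1 := hT.2 t ht
    have h2 := aux_intrinsic phiM psiM phiM.continuous_of_finiteDimensional
      psiM.continuous_of_finiteDimensional (trajHull A x) hinv (Set.mem_image_of_mem phiM h1)
    rw [htraj t] at h2
    rwa [hhull]

end Aux

/-- The critical value `T_cut` of a Hurwitz matrix depends only on its minimal polynomial:
if Hurwitz matrices `A` and `B` (possibly of different sizes) have the same minimal polynomial,
then `T_cut(A) = T_cut(B)`, i.e. the (common) value of `T_cut` at generic points of `A` equals
the one at generic points of `B`. -/
theorem Tcut_eq_of_minpoly_eq {d₁ d₂ : ℕ}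
    (A : Matrix (Fin d₁) (Fin d₁) ℝ) (B : Matrix (Fin d₂) (Fin d₂) ℝ)
    (hA : IsHurwitz A) (hB : IsHurwitz B)
    (h : minpoly ℝ A = minpoly ℝ B) :
    ∀ x : Fin d₁ → ℝ, IsGeneric A x → ∀ y : Fin d₂ → ℝ, IsGeneric B y →
      Tcut A x = Tcut B y := by
  intro x hx y hy
  unfold Tcut
  congr 1
  ext T
  exact ⟨fun hT => key_lemma A B h hx hy hT, fun hT => key_lemma B A h.symm hy hx hT⟩
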